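/- For every real number t > 1, ∑_{p prime} p^{−t} = ∑_{m=1}^∞ (μ(m)/m) · log ζ(tm), where μ is the Möbius function and ζ is the Riemann zeta function. In particular, ∑_{p prime} p⁻² = ∑_{m=1}^∞ (μ(m)/m) · log ζ(2m) < 1. -/

import Mathlib

open ArithmeticFunction

private noncomputable def Fmb (x : ℝ) : ℕ × ℕ → ℝ := fun mk =>
  (moebius mk.1 : ℝ) / ((mk.1 : ℝ) * (mk.2 : ℝ)) * x ^ (mk.1 * mk.2)

private lemma Fmb_zero (x : ℝ) (mk : ℕ × ℕ) (h : mk.1 = 0 ∨ mk.2 = 0) : Fmb x mk = 0 := by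
  obtain ⟨m, k⟩ := mk
  rcases h with h | h <;> (simp only at h; subst h; simp [Fmb])

private lemma Fmb_norm_le (x : ℝ) (hx0 : 0 ≤ x) {m k : ℕ} (hm : 1 ≤ m) (hk : 1 ≤ k) :
    ‖Fmb x (m, k)‖ ≤ x ^ (m * k) := by
  have hmk : 1 ≤ m * k := Nat.one_le_iff_ne_zero.mpr (by positivity)
  simp only [Fmb, norm_mul, norm_div, Real.norm_eq_abs, abs_pow, abs_of_nonneg hx0]
  have hmu : |((ArithmeticFunction.moebius m : ℤ) : ℝ)| ≤ 1 := by
    exact_mod_cast (ArithmeticFunction.abs_moebius_le_one (n := m))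
  have hd : (1 : ℝ) ≤ |(m : ℝ)| * |(k : ℝ)| := by
    rw [abs_of_nonneg (by positivity), abs_of_nonneg (by positivity)]
    exact_mod_cast hmk
  have hq : |((ArithmeticFunction.moebius m : ℤ) : ℝ)| / (|(m : ℝ)| * |(k : ℝ)|) ≤ 1 :=
    (div_le_one (by linarith)).mpr (hmu.trans hd)
  calc |((ArithmeticFunction.moebius m : ℤ) : ℝ)| / (|(m : ℝ)| * |(k : ℝ)|) * x ^ (m * k)
      ≤ 1 * x ^ (m * k) := mul_le_mul_of_nonneg_right hq (by positivity)
    _ = x ^ (m * k) := one_mul _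

private lemma Fmb_summable (x : ℝ) (hx0 : 0 ≤ x) (hx : x ≤ 1 / 2) : Summable (Fmb x) := by
  refine Summable.of_norm_bounded
    (g := fun mk : ℕ × ℕ => (1 / 2 : ℝ) ^ mk.1 * (4 * x * (1 / 2 : ℝ) ^ mk.2)) ?_ ?_
  · have h1 : Summable (fun n : ℕ => (1 / 2 : ℝ) ^ n) :=
      summable_geometric_of_lt_one (by norm_num) (by norm_num)
    have h2 : Summable (fun n : ℕ => 4 * x * (1 / 2 : ℝ) ^ n) := h1.mul_left _
    exact h1.mul_of_nonneg h2 (fun n => by positivity) (fun n => by positivity)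
  · rintro ⟨m, k⟩
    rcases Nat.eq_zero_or_pos m with rfl | hm
    · have h0 : Fmb x (0, k) = 0 := Fmb_zero x _ (Or.inl rfl)
      rw [h0, norm_zero]; positivity
    rcases Nat.eq_zero_or_pos k with rfl | hk
    · have h0 : Fmb x (m, 0) = 0 := Fmb_zero x _ (Or.inr rfl)
      rw [h0, norm_zero]; positivity
    have hmk : 1 ≤ m * k := Nat.one_le_iff_ne_zero.mpr (by positivity)
    have key : m + k - 2 ≤ m * k - 1 := by
      rcases eq_or_lt_of_le (Nat.one_le_iff_ne_zero.mpr hm.ne') with rfl | hm2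
      · omega
      · rcases eq_or_lt_of_le (Nat.one_le_iff_ne_zero.mpr hk.ne') with rfl | hk2
        · omega
        · have := Nat.add_le_mul hm2 hk2
          omega
    have h1 : ‖Fmb x (m, k)‖ ≤ x ^ (m * k) := Fmb_norm_le x hx0 hm hk
    refine h1.trans ?_
    have e : ((1 : ℝ) / 2) ^ (m + k - 2) * (1 / 2) ^ 2 = (1 / 2) ^ m * (1 / 2) ^ k := by
      rw [← pow_add, ← pow_add]; congr 1; omega
    calc x ^ (m * k) = x * x ^ (m * k - 1) := by
          conv_lhs => rw [show m * k = (m * k - 1) + 1 by omega, pow_succ']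
      _ ≤ x * (1 / 2 : ℝ) ^ (m * k - 1) :=
          mul_le_mul_of_nonneg_left (pow_le_pow_left₀ hx0 hx _) hx0
      _ ≤ x * (1 / 2 : ℝ) ^ (m + k - 2) :=
          mul_le_mul_of_nonneg_left (pow_le_pow_of_le_one (by norm_num) (by norm_num) key) hx0
      _ = (1 / 2 : ℝ) ^ m * (4 * x * (1 / 2) ^ k) := by linear_combination 4 * x * e

private lemma moebius_pow_hasSum (x : ℝ) (hx0 : 0 ≤ x) (hx : x ≤ 1 / 2) :
    HasSum (Fmb x) x := by
  have hsum := Fmb_summable x hx0 hx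
  have hfib := hsum.hasSum.tsum_fiberwise (fun mk : ℕ × ℕ => mk.1 * mk.2)
  have hfval : (fun n : ℕ => ∑' b : (fun mk : ℕ × ℕ => mk.1 * mk.2) ⁻¹' {n}, Fmb x b)
      = fun n : ℕ => if n = 1 then x else 0 := by
    funext n
    rcases eq_or_ne n 0 with rfl | hn
    · have hz : ∀ b : (fun mk : ℕ × ℕ => mk.1 * mk.2) ⁻¹' {(0 : ℕ)}, Fmb x b = 0 := by
        rintro ⟨⟨m, k⟩, hb⟩
        simp only [Set.mem_preimage, Set.mem_singleton_iff, Nat.mul_eq_zero] at hb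
        exact Fmb_zero x _ hb
      simp only [tsum_congr hz, tsum_zero]
      norm_num
    · have hset : (fun mk : ℕ × ℕ => mk.1 * mk.2) ⁻¹' {n} = ↑(n.divisorsAntidiagonal) := by
        ext mk
        simp [Nat.mem_divisorsAntidiagonal, hn]
      rw [hset, Finset.tsum_subtype' n.divisorsAntidiagonal (Fmb x)]
      have hterm : ∀ mk ∈ n.divisorsAntidiagonal,
          Fmb x mk = (moebius mk.1 : ℝ) * (x ^ n / n) := by
        intro mk hmk
        obtain ⟨hmul, -⟩ := Nat.mem_divisorsAntidiagonal.mp hmk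
        have hcast : ((mk.1 : ℝ) * (mk.2 : ℝ)) = (n : ℝ) := by rw [← Nat.cast_mul, hmul]
        simp only [Fmb]
        rw [hmul, hcast]
        ring
      rw [Finset.sum_congr rfl hterm, ← Finset.sum_mul]
      have hmoeb : (∑ mk ∈ n.divisorsAntidiagonal, (moebius mk.1 : ℝ))
          = if n = 1 then 1 else 0 := by
        have h := congrArg (fun f : ArithmeticFunction ℤ => f n) moebius_mul_coe_zeta
        simp only [mul_apply, one_apply] at h
        have h2 : (∑ mk ∈ n.divisorsAntidiagonal, moebius mk.1) = if n = 1 then 1 else 0 := by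
          rw [← h]
          refine Finset.sum_congr rfl fun mk hmk => ?_
          obtain ⟨hmul, hn0⟩ := Nat.mem_divisorsAntidiagonal.mp hmk
          have h2 : mk.2 ≠ 0 := by
            rintro h0
            exact hn0 (by simpa [h0] using hmul.symm)
          rw [natCoe_apply, zeta_apply_ne h2]; norm_num
        calc (∑ mk ∈ n.divisorsAntidiagonal, (moebius mk.1 : ℝ))
            = ((∑ mk ∈ n.divisorsAntidiagonal, moebius mk.1 : ℤ) : ℝ) := by push_cast; ring
          _ = _ := by rw [h2]; split <;> norm_num
      rw [hmoeb]
      rcases eq_or_ne n 1 with rfl | hn1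
      · norm_num
      · simp [hn1]
  rw [hfval] at hfib
  have hx' : (∑' mk : ℕ × ℕ, Fmb x mk) = x := hfib.unique (hasSum_ite_eq 1 x)
  have h := hsum.hasSum
  rw [hx'] at h
  exact h

private lemma prime_rpow_le_half (p : Nat.Primes) {s : ℝ} (hs : 1 ≤ s) :
    0 < ((p : ℕ) : ℝ) ^ (-s) ∧ ((p : ℕ) : ℝ) ^ (-s) ≤ 1 / 2 := by
  have hp2 : (2 : ℝ) ≤ ((p : ℕ) : ℝ) := by exact_mod_cast p.2.two_le
  have hp0 : (0 : ℝ) < ((p : ℕ) : ℝ) := by linarith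
  refine ⟨Real.rpow_pos_of_pos hp0 _, ?_⟩
  have h2 : (2 : ℝ) ≤ ((p : ℕ) : ℝ) ^ s := by
    calc (2 : ℝ) = 2 ^ (1 : ℝ) := (Real.rpow_one 2).symm
      _ ≤ 2 ^ s := (Real.rpow_le_rpow_left_iff (by norm_num)).mpr hs
      _ ≤ ((p : ℕ) : ℝ) ^ s := Real.rpow_le_rpow (by norm_num) hp2 (by linarith)
  rw [Real.rpow_neg hp0.le, show (1 : ℝ) / 2 = 2⁻¹ by norm_num]
  exact inv_anti₀ (by norm_num) h2

private lemma logZeta_hasSum {s : ℝ} (hs : 1 < s) :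
    HasSum (fun pk : Nat.Primes × ℕ =>
      (((pk.1 : ℕ) : ℝ) ^ (-s)) ^ (pk.2 + 1) / ((pk.2 : ℝ) + 1))
      (Real.log (riemannZeta (s : ℂ)).re) := by
  have hinner : ∀ p : Nat.Primes,
      HasSum (fun k : ℕ => (((p : ℕ) : ℝ) ^ (-s)) ^ (k + 1) / ((k : ℝ) + 1))
        (-Real.log (1 - ((p : ℕ) : ℝ) ^ (-s))) := by
    intro p
    obtain ⟨h0, h12⟩ := prime_rpow_le_half p hs.le
    exact_mod_cast Real.hasSum_pow_div_log_of_abs_lt_one (by rw [abs_of_nonneg h0.le]; linarith)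
  have hsummable : Summable (fun pk : Nat.Primes × ℕ =>
      (((pk.1 : ℕ) : ℝ) ^ (-s)) ^ (pk.2 + 1) / ((pk.2 : ℝ) + 1)) := by
    have h1 : Summable (fun p : Nat.Primes => ((p : ℕ) : ℝ) ^ (-s)) :=
      Nat.Primes.summable_rpow.mpr (by linarith)
    have h2 : Summable (fun n : ℕ => (1 / 2 : ℝ) ^ n) :=
      summable_geometric_of_lt_one (by norm_num) (by norm_num)
    have hb : Summable (fun pk : Nat.Primes × ℕ => ((pk.1 : ℕ) : ℝ) ^ (-s) * (1 / 2 : ℝ) ^ pk.2) :=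
      h1.mul_of_nonneg h2 (fun p => (prime_rpow_le_half p hs.le).1.le) (fun n => by positivity)
    refine Summable.of_nonneg_of_le (fun pk => by positivity) (fun pk => ?_) hb
    obtain ⟨h0, h12⟩ := prime_rpow_le_half pk.1 hs.le
    calc (((pk.1 : ℕ) : ℝ) ^ (-s)) ^ (pk.2 + 1) / ((pk.2 : ℝ) + 1)
        ≤ (((pk.1 : ℕ) : ℝ) ^ (-s)) ^ (pk.2 + 1) := by
          apply div_le_self (by positivity)
          have := Nat.cast_nonneg (α := ℝ) pk.2
          linarith
      _ = ((pk.1 : ℕ) : ℝ) ^ (-s) * (((pk.1 : ℕ) : ℝ) ^ (-s)) ^ pk.2 := by rw [pow_succ']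
      _ ≤ ((pk.1 : ℕ) : ℝ) ^ (-s) * (1 / 2 : ℝ) ^ pk.2 :=
          mul_le_mul_of_nonneg_left (pow_le_pow_left₀ h0.le h12 _) h0.le
  have houter : HasSum (fun p : Nat.Primes => -Real.log (1 - ((p : ℕ) : ℝ) ^ (-s)))
      (∑' pk : Nat.Primes × ℕ, (((pk.1 : ℕ) : ℝ) ^ (-s)) ^ (pk.2 + 1) / ((pk.2 : ℝ) + 1)) :=
    HasSum.prod_fiberwise hsummable.hasSum hinner
  have hlog : Real.log (riemannZeta (s : ℂ)).re
      = ∑' pk : Nat.Primes × ℕ, (((pk.1 : ℕ) : ℝ) ^ (-s)) ^ (pk.2 + 1) / ((pk.2 : ℝ) + 1) := by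
    have hz := riemannZeta_eulerProduct_exp_log (s := (s : ℂ)) (by simpa using hs)
    have hterm : (fun p : Nat.Primes => -Complex.log (1 - (p : ℂ) ^ (-(s : ℂ))))
        = fun p : Nat.Primes => ((-Real.log (1 - ((p : ℕ) : ℝ) ^ (-s)) : ℝ) : ℂ) := by
      funext p
      obtain ⟨h0, h12⟩ := prime_rpow_le_half p hs.le
      have hp0 : (0 : ℝ) ≤ ((p : ℕ) : ℝ) := Nat.cast_nonneg _
      have hc : ((((p : ℕ) : ℝ) ^ (-s) : ℝ) : ℂ) = (p : ℂ) ^ (-(s : ℂ)) := by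
        rw [Complex.ofReal_cpow hp0]
        push_cast
        ring_nf
      rw [← hc, ← Complex.ofReal_one, ← Complex.ofReal_sub,
        ← Complex.ofReal_log (by linarith), Complex.ofReal_neg]
    have hsum2 : HasSum (fun p : Nat.Primes => -Complex.log (1 - (p : ℂ) ^ (-(s : ℂ))))
        ((∑' pk : Nat.Primes × ℕ,
          (((pk.1 : ℕ) : ℝ) ^ (-s)) ^ (pk.2 + 1) / ((pk.2 : ℝ) + 1) : ℝ) : ℂ) := by
      rw [hterm]
      exact Complex.hasSum_ofReal.mpr houter
    rw [← hz, hsum2.tsum_eq, ← Complex.ofReal_exp, Complex.ofReal_re, Real.log_exp]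
  rw [hlog]
  exact hsummable.hasSum

open ArithmeticFunction in
private noncomputable def Tt (t : ℝ) : ℕ × (Nat.Primes × ℕ) → ℝ :=
  fun x => Fmb (((x.2.1 : ℕ) : ℝ) ^ (-t)) (x.1, x.2.2 + 1)

private lemma pow_bound {x : ℝ} (h0 : 0 ≤ x) (h12 : x ≤ 1 / 2) {m k : ℕ} (hm : 1 ≤ m) :
    x ^ (m * (k + 1)) ≤ (1 / 2 : ℝ) ^ m * (2 * x * (1 / 2) ^ k) := by
  have hexp : m + k ≤ m * (k + 1) := by
    have := Nat.le_mul_of_pos_left k hm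
    nlinarith
  have e : ((1 : ℝ) / 2) ^ (m + k - 1) * (1 / 2) ^ 1 = (1 / 2) ^ m * (1 / 2) ^ k := by
    rw [← pow_add, ← pow_add]; congr 1; omega
  calc x ^ (m * (k + 1)) = x * x ^ (m * (k + 1) - 1) := by
        conv_lhs => rw [show m * (k + 1) = (m * (k + 1) - 1) + 1 by omega, pow_succ']
    _ ≤ x * (1 / 2 : ℝ) ^ (m * (k + 1) - 1) :=
        mul_le_mul_of_nonneg_left (pow_le_pow_left₀ h0 h12 _) h0
    _ ≤ x * (1 / 2 : ℝ) ^ (m + k - 1) := by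
        refine mul_le_mul_of_nonneg_left
          (pow_le_pow_of_le_one (by norm_num) (by norm_num) (by omega)) h0
    _ = (1 / 2 : ℝ) ^ m * (2 * x * (1 / 2) ^ k) := by linear_combination 2 * x * e

private def eSwap : Nat.Primes × (ℕ × ℕ) ≃ ℕ × (Nat.Primes × ℕ) :=
  ⟨fun y => (y.2.1, (y.1, y.2.2)), fun x => (x.2.1, (x.1, x.2.2)),
    fun _ => rfl, fun _ => rfl⟩

open ArithmeticFunction in
private lemma main_eq {t : ℝ} (ht : 1 < t) :
    ∑' p : Nat.Primes, ((p : ℕ) : ℝ) ^ (-t) =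
      ∑' m : ℕ, ((moebius m : ℝ) / (m : ℝ)) * Real.log (riemannZeta (t * (m : ℂ))).re := by
  -- summability of the triple sum
  have hTsum : Summable (Tt t) := by
    refine Summable.of_norm_bounded (g := fun x : ℕ × (Nat.Primes × ℕ) =>
      (1 / 2 : ℝ) ^ x.1 * (2 * ((x.2.1 : ℕ) : ℝ) ^ (-t) * (1 / 2 : ℝ) ^ x.2.2)) ?_ ?_
    · have h1 : Summable (fun n : ℕ => (1 / 2 : ℝ) ^ n) :=
        summable_geometric_of_lt_one (by norm_num) (by norm_num)
      have hp : Summable (fun p : Nat.Primes => 2 * ((p : ℕ) : ℝ) ^ (-t)) :=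
        (Nat.Primes.summable_rpow.mpr (by linarith)).mul_left 2
      have h2 : Summable (fun pk : Nat.Primes × ℕ =>
          2 * ((pk.1 : ℕ) : ℝ) ^ (-t) * (1 / 2 : ℝ) ^ pk.2) :=
        hp.mul_of_nonneg h1
          (fun p => by positivity) (fun n => by positivity)
      exact h1.mul_of_nonneg h2 (fun n => by positivity) (fun pk => by positivity)
    · rintro ⟨m, p, k⟩
      obtain ⟨h0, h12⟩ := prime_rpow_le_half p ht.le
      rcases Nat.eq_zero_or_pos m with rfl | hm
      · have hz : Tt t (0, (p, k)) = 0 := Fmb_zero _ _ (Or.inl rfl)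
        rw [hz, norm_zero]; positivity
      · have hb : ‖Tt t (m, (p, k))‖ ≤ (((p : ℕ) : ℝ) ^ (-t)) ^ (m * (k + 1)) :=
          Fmb_norm_le _ h0.le hm (by omega)
        exact hb.trans (pow_bound h0.le h12 hm)
  have hS := hTsum.hasSum
  -- fiberwise over m
  have hfm : ∀ m : ℕ, HasSum (fun pk : Nat.Primes × ℕ => Tt t (m, pk))
      ((moebius m : ℝ) / (m : ℝ) * Real.log (riemannZeta (t * (m : ℂ))).re) := by
    intro m
    rcases Nat.eq_zero_or_pos m with rfl | hm
    · have h0 : (fun pk : Nat.Primes × ℕ => Tt t (0, pk)) = fun _ => (0 : ℝ) := by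
        funext pk; exact Fmb_zero _ _ (Or.inl rfl)
      rw [h0]
      simpa using hasSum_zero
    · have hm1 : (1 : ℝ) ≤ (m : ℝ) := by exact_mod_cast hm
      have hs1 : 1 < t * (m : ℝ) := by nlinarith
      have h := (logZeta_hasSum hs1).mul_left ((moebius m : ℝ) / (m : ℝ))
      have harg : ((t * (m : ℝ) : ℝ) : ℂ) = (t : ℂ) * (m : ℂ) := by push_cast; ring
      rw [harg] at h
      have hterm : (fun pk : Nat.Primes × ℕ => (moebius m : ℝ) / (m : ℝ) *
            ((((pk.1 : ℕ) : ℝ) ^ (-(t * (m : ℝ)))) ^ (pk.2 + 1) / ((pk.2 : ℝ) + 1)))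
          = fun pk : Nat.Primes × ℕ => Tt t (m, pk) := by
        funext pk
        have hp0 : (0 : ℝ) < ((pk.1 : ℕ) : ℝ) := by
          have := pk.1.2.two_le
          have : (2 : ℝ) ≤ ((pk.1 : ℕ) : ℝ) := by exact_mod_cast this
          linarith
        have hxm : ((pk.1 : ℕ) : ℝ) ^ (-(t * (m : ℝ))) = (((pk.1 : ℕ) : ℝ) ^ (-t)) ^ m := by
          rw [← Real.rpow_natCast (((pk.1 : ℕ) : ℝ) ^ (-t)) m, ← Real.rpow_mul hp0.le]
          ring_nf
        rw [hxm, ← pow_mul]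
        simp only [Tt, Fmb]
        have hm0 : (m : ℝ) ≠ 0 := Nat.cast_ne_zero.mpr (by omega)
        have hk0 : ((pk.2 : ℝ) + 1) ≠ 0 := by positivity
        push_cast
        field_simp
      rw [hterm] at h
      exact h
  have hR : HasSum (fun m : ℕ =>
      (moebius m : ℝ) / (m : ℝ) * Real.log (riemannZeta (t * (m : ℂ))).re)
      (∑' x : ℕ × (Nat.Primes × ℕ), Tt t x) := HasSum.prod_fiberwise hS hfm
  -- fiberwise over p
  have hfp : ∀ p : Nat.Primes,
      HasSum (fun mk : ℕ × ℕ => Tt t (mk.1, (p, mk.2))) (((p : ℕ) : ℝ) ^ (-t)) := by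
    intro p
    obtain ⟨h0, h12⟩ := prime_rpow_le_half p ht.le
    have hA := moebius_pow_hasSum _ h0.le h12
    have hinj : Function.Injective (fun mk : ℕ × ℕ => (mk.1, mk.2 + 1)) := by
      rintro ⟨a, b⟩ ⟨c, d⟩ h
      simp only [Prod.mk.injEq] at h ⊢
      exact ⟨h.1, by omega⟩
    have hvanish : ∀ c ∉ Set.range (fun mk : ℕ × ℕ => (mk.1, mk.2 + 1)),
        Fmb (((p : ℕ) : ℝ) ^ (-t)) c = 0 := by
      rintro ⟨a, b⟩ hc
      have hb : b = 0 := by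
        by_contra hb
        refine hc ⟨(a, b - 1), ?_⟩
        have hb1 : b - 1 + 1 = b := Nat.succ_pred_eq_of_pos (Nat.pos_of_ne_zero hb)
        simp only [Prod.mk.injEq]
        exact ⟨trivial, hb1⟩
      exact Fmb_zero _ _ (Or.inr hb)
    exact (hinj.hasSum_iff hvanish).mpr hA
  have hS' : HasSum (Tt t ∘ eSwap) (∑' x : ℕ × (Nat.Primes × ℕ), Tt t x) :=
    eSwap.hasSum_iff.mpr hS
  have hP : HasSum (fun p : Nat.Primes => ((p : ℕ) : ℝ) ^ (-t))
      (∑' x : ℕ × (Nat.Primes × ℕ), Tt t x) :=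
    HasSum.prod_fiberwise hS' (fun b => by
      simpa only [eSwap, Function.comp_def, Equiv.coe_fn_mk] using hfp b)
  exact hP.tsum_eq.trans hR.tsum_eq.symm

/-- Equations (4) and (11) of Banks–Martin: for every real `t > 1`,
`∑_{p prime} p^{-t} = ∑_{m=1}^∞ (μ(m)/m) log ζ(tm)` (where `μ` is the Möbius function
and `ζ` is the Riemann zeta function; the `m = 0` term of the `tsum` vanishes since
`μ(0) = 0`); in particular `∑_{p prime} p⁻² = ∑_{m=1}^∞ (μ(m)/m) log ζ(2m) < 1`. -/
theorem prime_sum_moebius_zeta :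
    (∀ t : ℝ, 1 < t →
      ∑' p : {p : ℕ | p.Prime}, (p : ℝ) ^ (-t) =
        ∑' m : ℕ, ((ArithmeticFunction.moebius m : ℝ) / (m : ℝ)) *
          Real.log (riemannZeta (t * (m : ℂ))).re) ∧
    (∑' p : {p : ℕ | p.Prime}, 1 / ((p : ℝ) ^ 2) =
      ∑' m : ℕ, ((ArithmeticFunction.moebius m : ℝ) / (m : ℝ)) *
        Real.log (riemannZeta (2 * (m : ℂ))).re) ∧
    ∑' p : {p : ℕ | p.Prime}, 1 / ((p : ℝ) ^ 2) < 1 := by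
  have hsub : ∀ f : ℕ → ℝ, ∑' p : {p : ℕ | p.Prime}, f p = ∑' p : Nat.Primes, f p := by
    intro f
    exact (Equiv.subtypeEquivRight (q := Nat.Prime) (fun x => Iff.rfl)).tsum_eq
      (fun p : Nat.Primes => f (p : ℕ))
  have h1 : ∀ t : ℝ, 1 < t →
      ∑' p : {p : ℕ | p.Prime}, (p : ℝ) ^ (-t) =
        ∑' m : ℕ, ((ArithmeticFunction.moebius m : ℝ) / (m : ℝ)) *
          Real.log (riemannZeta (t * (m : ℂ))).re := by
    intro t ht
    exact (hsub fun n => (n : ℝ) ^ (-t)).trans (main_eq ht)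
  refine ⟨h1, ?_, ?_⟩
  · have e1 : ∑' p : {p : ℕ | p.Prime}, 1 / ((p : ℝ) ^ 2)
        = ∑' p : {p : ℕ | p.Prime}, (p : ℝ) ^ (-(2 : ℝ)) := by
      refine tsum_congr fun p => ?_
      rw [Real.rpow_neg (Nat.cast_nonneg _), show ((2 : ℝ)) = ((2 : ℕ) : ℝ) by norm_num,
        Real.rpow_natCast, one_div]
    rw [e1, h1 2 (by norm_num)]
    refine tsum_congr fun m => ?_
    norm_num
  · have hg : HasSum (fun n : ℕ => 1 / (n : ℝ) ^ 2) (Real.pi ^ 2 / 6) := hasSum_zeta_two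
    have hg2 : HasSum (fun n : ℕ => 1 / (((n + 2 : ℕ)) : ℝ) ^ 2) (Real.pi ^ 2 / 6 - 1) := by
      refine (hasSum_nat_add_iff (f := fun n : ℕ => 1 / (n : ℝ) ^ 2) 2).mpr ?_
      have he : Real.pi ^ 2 / 6 - 1 + ∑ i ∈ Finset.range 2, 1 / (i : ℝ) ^ 2
          = Real.pi ^ 2 / 6 := by
        norm_num [Finset.sum_range_succ]
      rw [he]
      exact hg
    have hsf : Summable (fun p : {p : ℕ | p.Prime} => 1 / ((p : ℝ) ^ 2)) :=
      hg.summable.subtype {p : ℕ | p.Prime}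
    have hinj : Function.Injective (fun p : {p : ℕ | p.Prime} => (p : ℕ) - 2) := by
      intro p q h
      have hp : Nat.Prime (p : ℕ) := p.2
      have hq : Nat.Prime (q : ℕ) := q.2
      have h2p := hp.two_le
      have h2q := hq.two_le
      simp only at h
      exact Subtype.ext (by omega)
    have hle : ∀ p : {p : ℕ | p.Prime},
        1 / ((p : ℝ) ^ 2) ≤ 1 / (((((p : ℕ) - 2) + 2 : ℕ)) : ℝ) ^ 2 := by
      intro p
      have hp : Nat.Prime (p : ℕ) := p.2
      have h2p := hp.two_le
      have h2 : ((p : ℕ) - 2) + 2 = (p : ℕ) := by omega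
      rw [h2]
    have hle2 : ∑' p : {p : ℕ | p.Prime}, 1 / ((p : ℝ) ^ 2) ≤ Real.pi ^ 2 / 6 - 1 := by
      have ht := hsf.tsum_le_tsum_of_inj (fun p : {p : ℕ | p.Prime} => (p : ℕ) - 2) hinj
        (fun c _ => by positivity) hle hg2.summable
      rw [hg2.tsum_eq] at ht
      exact ht
    have hpi := Real.pi_lt_d2
    have hpi3 := Real.pi_gt_three
    nlinarith [hle2]
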